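/- Let B′, B″ ∈ ℝ^{N×k} be real matrices. Then the matrix exponential of B′B″ᵀ satisfies exp(B′B″ᵀ) = I_N + B′ · 𝔄(B″ᵀB′) · B″ᵀ, where 𝔄(X) = Σ_{m=0}^∞ (1/(m+1)!) Xᵐ is a convergent series of k×k matrices. -/

import Mathlib

open Matrix

attribute [local instance] Matrix.linftyOpNormedAddCommGroup Matrix.linftyOpNormedRing
  Matrix.linftyOpNormedAlgebra Matrix.linftyOpNormedSpace

/-- For `B′, B″ ∈ ℝ^{N×k}`, the matrix exponential satisfies
`exp(B′B″ᵀ) = I + B′ · 𝔄(B″ᵀB′) · B″ᵀ`, where `𝔄(X) = Σ_{m≥0} (1/(m+1)!) Xᵐ` is a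
convergent (summable) series of `k×k` matrices. -/
theorem exp_low_rank_factorization (N k : ℕ)
    (B' B'' : Matrix (Fin N) (Fin k) ℝ) :
    Summable (fun m : ℕ => ((m + 1).factorial : ℝ)⁻¹ • (B''ᵀ * B') ^ m) ∧
    NormedSpace.exp (B' * B''ᵀ) =
      1 + B' * (∑' m : ℕ, ((m + 1).factorial : ℝ)⁻¹ • (B''ᵀ * B') ^ m) * B''ᵀ := by
  set X : Matrix (Fin k) (Fin k) ℝ := B''ᵀ * B' with hX
  have hsum : Summable (fun m : ℕ => ((m + 1).factorial : ℝ)⁻¹ • X ^ m) := by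
    apply Summable.of_norm
    apply Summable.of_nonneg_of_le (fun n => norm_nonneg _) _
      (NormedSpace.norm_expSeries_summable' (𝕂 := ℝ) X)
    intro n
    rw [norm_smul, norm_smul]
    apply mul_le_mul_of_nonneg_right _ (norm_nonneg _)
    rw [Real.norm_eq_abs, Real.norm_eq_abs, abs_of_nonneg (by positivity),
      abs_of_nonneg (by positivity)]
    apply inv_anti₀
    · positivity
    · exact_mod_cast Nat.factorial_le (Nat.le_succ n)
  refine ⟨hsum, ?_⟩
  have hA : Summable (fun n : ℕ => ((n).factorial : ℝ)⁻¹ • (B' * B''ᵀ) ^ n) :=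
    NormedSpace.expSeries_summable' (𝕂 := ℝ) (B' * B''ᵀ)
  have hpow : ∀ m : ℕ, (B' * B''ᵀ) ^ (m + 1) = B' * X ^ m * B''ᵀ := by
    intro m
    induction m with
    | zero => simp [hX]
    | succ n ih =>
      rw [pow_succ, ih, pow_succ, hX]
      simp only [Matrix.mul_assoc]
  -- the continuous linear map Y ↦ B' * Y * B''ᵀ
  let f : Matrix (Fin k) (Fin k) ℝ →ₗ[ℝ] Matrix (Fin N) (Fin N) ℝ :=
    { toFun := fun Y => B' * Y * B''ᵀ
      map_add' := fun Y Z => by simp [Matrix.mul_add, Matrix.add_mul]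
      map_smul' := fun c Y => by simp [Matrix.mul_smul, Matrix.smul_mul] }
  let F : Matrix (Fin k) (Fin k) ℝ →L[ℝ] Matrix (Fin N) (Fin N) ℝ :=
    LinearMap.toContinuousLinearMap f
  have hmap := F.map_tsum hsum
  have hF : ∀ Y, F Y = B' * Y * B''ᵀ := fun Y => rfl
  rw [NormedSpace.exp_eq_tsum (𝕂 := ℝ)]
  beta_reduce
  rw [hA.tsum_eq_zero_add, ← hF, hmap]
  simp only [hF, smul_mul_assoc, Matrix.mul_smul, hpow]
  simp [Matrix.mul_smul, Matrix.smul_mul]
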